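/- Leading-eigenvalue lower bound for survival in a ball: Let B ⊆ Z^d be finite, Q the killed random walk operator on l^2(B), with largest eigenvalue 1 - lambda^{(1)} (simple) and normalized eigenfunction phi^{(1)} ≥ 0, and second eigenvalue (of Q^2) equal to (1 - lambda^{(2)})^2 with lambda^{(2)} - lambda^{(1)} ≥ gamma > 0. Let N be even and 0 ∈ B with phi^{(1)}(0) ≥ beta > 0. Then P_0(walk stays in B and is at an even site at time N) = (Q^{N/2} applied twice, i.e. Q^N 1_e)(0) ≥ (1 - lambda^{(1)})^N beta^2 - (1 - lambda^{(2)})^N |B|^{1/2}. In particular, if (1-lambda^{(2)})^N |B|^{1/2} ≤ (1/2)(1-lambda^{(1)})^N beta^2, then P_0(tau_{B^c} > N) ≥ (1/2) exp(-N(lambda^{(1)} + (lambda^{(1)})^2)) beta^2. -/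

import Mathlib

/-- Nearest-neighbor adjacency on `ℤ^d`. -/
def adjacentPt {d : ℕ} (x y : Fin d → ℤ) : Prop :=
  (∑ i, |x i - y i|) = 1

instance {d : ℕ} (x y : Fin d → ℤ) : Decidable (adjacentPt x y) := by
  unfold adjacentPt; infer_instance

/-- A lattice site is even if its coordinate sum is even. -/
def evenSite {d : ℕ} (x : Fin d → ℤ) : Prop := Even (∑ i, x i)

instance {d : ℕ} (x : Fin d → ℤ) : Decidable (evenSite x) := by
  unfold evenSite; infer_instance

/-- The substochastic transition operator of simple symmetric random walk on
`ℤ^d` killed outside the finite set `B`, acting on functions on `B`. -/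
noncomputable def Qop (d : ℕ) (B : Finset (Fin d → ℤ)) (f : ↥B → ℝ) :
    ↥B → ℝ :=
  fun u => (1 / (2 * (d : ℝ))) *
    ∑ v : ↥B, if adjacentPt (u : Fin d → ℤ) (v : Fin d → ℤ) then f v else 0

lemma adj_parity {d : ℕ} {x y : Fin d → ℤ} (h : adjacentPt x y) :
    (evenSite x ↔ ¬ evenSite y) := by
  have hneg : ∀ b : ZMod 2, -b = b := by decide
  have habs : ∀ a : ℤ, ((|a| : ℤ) : ZMod 2) = (a : ZMod 2) := by
    intro a
    rcases abs_choice a with hh | hh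
    · rw [hh]
    · rw [hh]; push_cast; exact hneg _
  have key : ∀ z : Fin d → ℤ, (evenSite z ↔ ((∑ i, z i : ℤ) : ZMod 2) = 0) := by
    intro z
    rw [evenSite, even_iff_two_dvd]
    rw [show ((2:ℤ) ∣ ∑ i, z i) ↔ (((2:ℕ):ℤ) ∣ ∑ i, z i) by norm_num]
    rw [← ZMod.intCast_zmod_eq_zero_iff_dvd]
  have hcast : ((∑ i, x i : ℤ) : ZMod 2) = ((∑ i, y i : ℤ) : ZMod 2) + 1 := by
    have h2 : ((∑ i, |x i - y i| : ℤ) : ZMod 2) = 1 := by rw [h]; norm_num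
    have h3 : ((∑ i, |x i - y i| : ℤ) : ZMod 2) = ((∑ i, (x i - y i) : ℤ) : ZMod 2) := by
      rw [Int.cast_sum, Int.cast_sum]
      exact Finset.sum_congr rfl (fun i _ => habs _)
    rw [h3, Finset.sum_sub_distrib, Int.cast_sub] at h2
    linear_combination h2
  rw [key x, key y, hcast]
  generalize ((∑ i, y i : ℤ) : ZMod 2) = a
  revert a; decide

lemma exp_aux {x : ℝ} (hx : 0 < x) (hx2 : x ≤ 1/2) :
    Real.exp (-(x + x^2)) ≤ 1 - x := by
  have ht : (0:ℝ) ≤ x + x^2 := by positivity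
  have h1 : 1 + (x+x^2) + (x+x^2)^2/2 ≤ Real.exp (x+x^2) :=
    Real.quadratic_le_exp_of_nonneg ht
  have hx1 : (0:ℝ) ≤ 1 - x := by linarith
  have h3 : (1-x)*(1+(x+x^2)+(x+x^2)^2/2) ≤ (1-x)*Real.exp (x+x^2) :=
    mul_le_mul_of_nonneg_left h1 hx1
  have h2 : 1 ≤ (1-x) * Real.exp (x+x^2) := by
    nlinarith [mul_nonneg (sq_nonneg x) (show (0:ℝ) ≤ 1 - x - x^2 - x^3 by nlinarith)]
  have hmul : Real.exp (-(x+x^2)) * Real.exp (x+x^2) = 1 := by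
    rw [← Real.exp_add, show (-(x+x^2) + (x+x^2)) = 0 by ring, Real.exp_zero]
  nlinarith [mul_le_mul_of_nonneg_left h2 (Real.exp_pos (-(x+x^2))).le, hmul]

section Qlemmas
variable {d : ℕ} {B : Finset (Fin d → ℤ)}

lemma Qop_add (f g : ↥B → ℝ) : Qop d B (f + g) = Qop d B f + Qop d B g := by
  funext u
  simp only [Qop, Pi.add_apply]
  have : ∑ v : ↥B, (if adjacentPt (u:Fin d → ℤ) (v:Fin d → ℤ) then f v + g v else 0)
      = (∑ v : ↥B, (if adjacentPt (u:Fin d → ℤ) (v:Fin d → ℤ) then f v else 0))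
      + (∑ v : ↥B, (if adjacentPt (u:Fin d → ℤ) (v:Fin d → ℤ) then g v else 0)) := by
    rw [← Finset.sum_add_distrib]
    exact Finset.sum_congr rfl (fun v _ => by split_ifs <;> ring)
  rw [this]; ring

lemma Qop_smul (a : ℝ) (f : ↥B → ℝ) : Qop d B (a • f) = a • Qop d B f := by
  funext u
  simp only [Qop, Pi.smul_apply, smul_eq_mul]
  have : ∑ v : ↥B, (if adjacentPt (u:Fin d → ℤ) (v:Fin d → ℤ) then a * f v else 0)
      = a * ∑ v : ↥B, (if adjacentPt (u:Fin d → ℤ) (v:Fin d → ℤ) then f v else 0) := by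
    rw [Finset.mul_sum]
    exact Finset.sum_congr rfl (fun v _ => by split_ifs <;> ring)
  rw [this]; ring

lemma Qit_add (n : ℕ) (f g : ↥B → ℝ) :
    (Qop d B)^[n] (f + g) = (Qop d B)^[n] f + (Qop d B)^[n] g := by
  induction n generalizing f g with
  | zero => simp
  | succ n ih =>
    rw [Function.iterate_succ_apply, Qop_add, ih, ← Function.iterate_succ_apply,
      ← Function.iterate_succ_apply]

lemma Qit_smul (n : ℕ) (a : ℝ) (f : ↥B → ℝ) :
    (Qop d B)^[n] (a • f) = a • (Qop d B)^[n] f := by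
  induction n generalizing f with
  | zero => simp
  | succ n ih =>
    rw [Function.iterate_succ_apply, Qop_smul, ih, ← Function.iterate_succ_apply]

lemma Qop_mono {f g : ↥B → ℝ} (h : ∀ u, f u ≤ g u) : ∀ u, Qop d B f u ≤ Qop d B g u := by
  intro u
  unfold Qop
  apply mul_le_mul_of_nonneg_left _ (by positivity)
  apply Finset.sum_le_sum
  intro v _
  split_ifs
  · exact h v
  · exact le_refl 0

lemma Qit_mono (n : ℕ) {f g : ↥B → ℝ} (h : ∀ u, f u ≤ g u) :
    ∀ u, (Qop d B)^[n] f u ≤ (Qop d B)^[n] g u := by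
  induction n generalizing f g with
  | zero => simpa using h
  | succ n ih =>
    intro u
    rw [Function.iterate_succ_apply, Function.iterate_succ_apply]
    exact ih (Qop_mono h) u

end Qlemmas

noncomputable def phiE {d : ℕ} {B : Finset (Fin d → ℤ)} (phi : ↥B → ℝ) : ↥B → ℝ :=
  fun u => if evenSite (u : Fin d → ℤ) then phi u else 0

noncomputable def phiO {d : ℕ} {B : Finset (Fin d → ℤ)} (phi : ↥B → ℝ) : ↥B → ℝ :=
  fun u => if ¬ evenSite (u : Fin d → ℤ) then phi u else 0

section Parity
variable {d : ℕ} {B : Finset (Fin d → ℤ)} {lam1 : ℝ} {phi : ↥B → ℝ}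

lemma QphiE (heig : Qop d B phi = fun u => (1 - lam1) * phi u) :
    Qop d B (phiE phi) = (1 - lam1) • phiO phi := by
  funext u
  by_cases hu : evenSite (u : Fin d → ℤ)
  · have hz : ∀ v : ↥B, v ∈ Finset.univ →
        (if adjacentPt (u:Fin d → ℤ) (v:Fin d → ℤ) then phiE phi v else 0) = 0 := by
      intro v _
      by_cases h1 : adjacentPt (u:Fin d → ℤ) (v:Fin d → ℤ)
      · have hv : ¬ evenSite (v : Fin d → ℤ) := (adj_parity h1).mp hu
        simp [phiE, h1, hv]
      · simp [h1]
    simp only [Qop, Pi.smul_apply, smul_eq_mul, phiO, hu, not_true_eq_false, if_false,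
      Finset.sum_eq_zero hz, mul_zero]
  · have hz : ∀ v : ↥B, v ∈ Finset.univ →
        (if adjacentPt (u:Fin d → ℤ) (v:Fin d → ℤ) then phiE phi v else 0)
          = (if adjacentPt (u:Fin d → ℤ) (v:Fin d → ℤ) then phi v else 0) := by
      intro v _
      by_cases h1 : adjacentPt (u:Fin d → ℤ) (v:Fin d → ℤ)
      · have hv : evenSite (v : Fin d → ℤ) :=
          not_not.mp (fun hc => hu ((adj_parity h1).mpr hc))
        simp [phiE, h1, hv]
      · simp [h1]
    have := congrFun heig u
    simp only [Qop] at this ⊢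
    rw [Finset.sum_congr rfl hz, this]
    simp [phiO, hu]

lemma QphiO (heig : Qop d B phi = fun u => (1 - lam1) * phi u) :
    Qop d B (phiO phi) = (1 - lam1) • phiE phi := by
  funext u
  by_cases hu : evenSite (u : Fin d → ℤ)
  · have hz : ∀ v : ↥B, v ∈ Finset.univ →
        (if adjacentPt (u:Fin d → ℤ) (v:Fin d → ℤ) then phiO phi v else 0)
          = (if adjacentPt (u:Fin d → ℤ) (v:Fin d → ℤ) then phi v else 0) := by
      intro v _
      by_cases h1 : adjacentPt (u:Fin d → ℤ) (v:Fin d → ℤ)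
      · have hv : ¬ evenSite (v : Fin d → ℤ) := (adj_parity h1).mp hu
        simp [phiO, h1, hv]
      · simp [h1]
    have := congrFun heig u
    simp only [Qop] at this ⊢
    rw [Finset.sum_congr rfl hz, this]
    simp [phiE, hu]
  · have hz : ∀ v : ↥B, v ∈ Finset.univ →
        (if adjacentPt (u:Fin d → ℤ) (v:Fin d → ℤ) then phiO phi v else 0) = 0 := by
      intro v _
      by_cases h1 : adjacentPt (u:Fin d → ℤ) (v:Fin d → ℤ)
      · have hv : evenSite (v : Fin d → ℤ) :=
          not_not.mp (fun hc => hu ((adj_parity h1).mpr hc))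
        simp [phiO, h1, hv]
      · simp [h1]
    simp only [Qop, Pi.smul_apply, smul_eq_mul, phiE, hu, if_false,
      Finset.sum_eq_zero hz, mul_zero]

lemma Qit_phiE (heig : Qop d B phi = fun u => (1 - lam1) * phi u) (k : ℕ) :
    (Qop d B)^[2*k] (phiE phi) = ((1 - lam1)^(2*k)) • phiE phi := by
  induction k with
  | zero => simp
  | succ k ih =>
    have h2 : Qop d B (Qop d B (phiE phi)) = ((1 - lam1)^2) • phiE phi := by
      rw [QphiE heig, Qop_smul, QphiO heig, smul_smul, ← pow_two]
    have : 2*(k+1) = (2*k) + 1 + 1 := by ring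
    rw [this, Function.iterate_succ_apply, Function.iterate_succ_apply, h2,
      Qit_smul, ih, smul_smul, ← pow_add]
    ring_nf

end Parity

set_option maxHeartbeats 4000000 in
/-- **Leading-eigenvalue lower bound for survival in a ball (Lemma A.4, core).**
Let `Q` be the killed walk operator on `l²(B)` with simple top eigenvalue
`1 − λ₁`, nonnegative normalized eigenfunction `φ` with `φ(0) ≥ β > 0`, and
second eigenvalue of `Q²` equal to `(1 − λ₂)²` with `λ₂ − λ₁ ≥ γ > 0` (encoded
by the operator bound on the orthogonal complement of `span{φ·1_e, φ·1_o}`).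
Then for even `N`,
`Q^N 1_e(0) ≥ (1 − λ₁)^N β² − (1 − λ₂)^N |B|^{1/2}`; in particular, if
`(1 − λ₂)^N |B|^{1/2} ≤ ½ (1 − λ₁)^N β²`, then
`P_0(τ_{B^c} > N) = Q^N 1(0) ≥ ½ exp(−N(λ₁ + λ₁²)) β²`. -/
theorem survival_eigenvalue_lower_bound (d : ℕ) (hd : 1 ≤ d)
    (B : Finset (Fin d → ℤ)) (h0 : (0 : Fin d → ℤ) ∈ B)
    (N : ℕ) (hNeven : Even N)
    (lam1 lam2 beta gamma : ℝ)
    (hlam1 : 0 < lam1) (hl12 : lam1 ≤ lam2) (hlam2 : lam2 < 1)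
    (hsmall : lam1 ≤ 1 / 2)
    (hgamma : 0 < gamma) (hgap : gamma ≤ lam2 - lam1)
    (phi : ↥B → ℝ)
    (hnorm : ∑ u : ↥B, (phi u) ^ 2 = 1)
    (hpos : ∀ u, 0 ≤ phi u)
    (heig : Qop d B phi = fun u => (1 - lam1) * phi u)
    (hbeta : 0 < beta) (hphi0 : beta ≤ phi ⟨0, h0⟩)
    (hsecond : ∀ f : ↥B → ℝ,
      (∑ u : ↥B, f u * (if evenSite (u : Fin d → ℤ) then phi u else 0)) = 0 →
      (∑ u : ↥B, f u * (if ¬ evenSite (u : Fin d → ℤ) then phi u else 0)) = 0 →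
      ∑ u : ↥B, ((Qop d B)^[N] f u) ^ 2 ≤
        (1 - lam2) ^ (2 * N) * ∑ u : ↥B, (f u) ^ 2) :
    (1 - lam1) ^ N * beta ^ 2 - (1 - lam2) ^ N * Real.sqrt (B.card : ℝ) ≤
        (Qop d B)^[N]
          (fun u : ↥B => if evenSite (u : Fin d → ℤ) then 1 else 0) ⟨0, h0⟩ ∧
      ((1 - lam2) ^ N * Real.sqrt (B.card : ℝ) ≤
          (1 / 2) * (1 - lam1) ^ N * beta ^ 2 →
        (1 / 2) * Real.exp (-(N : ℝ) * (lam1 + lam1 ^ 2)) * beta ^ 2 ≤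
          (Qop d B)^[N] (fun _ : ↥B => (1 : ℝ)) ⟨0, h0⟩) := by
  classical
  obtain ⟨k, hk⟩ := hNeven
  have hN : N = 2 * k := by omega
  have h1l : (0:ℝ) < 1 - lam1 := by linarith
  have h2l : (0:ℝ) ≤ 1 - lam2 := by linarith
  have heven0 : evenSite (((⟨0, h0⟩ : ↥B) : ↥B) : Fin d → ℤ) := by
    show evenSite (0 : Fin d → ℤ)
    simp [evenSite]
  have hfe0 : phiE phi (⟨0, h0⟩ : ↥B) = phi ⟨0, h0⟩ := by
    simp [phiE, heven0]
  have hfe_nonneg : ∀ u : ↥B, 0 ≤ phiE phi u := by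
    intro u; simp only [phiE]; split_ifs
    exacts [hpos u, le_refl 0]
  have hfe_sq_le : ∀ u : ↥B, (phiE phi u)^2 ≤ (phi u)^2 := by
    intro u; simp only [phiE]; split_ifs with h
    · exact le_rfl
    · simpa using sq_nonneg (phi u)
  have hEpos : 0 < ∑ u : ↥B, (phiE phi u)^2 := by
    have h1 : (phiE phi (⟨0,h0⟩:↥B))^2 ≤ ∑ u : ↥B, (phiE phi u)^2 :=
      Finset.single_le_sum (f := fun u : ↥B => (phiE phi u)^2)
        (fun i _ => sq_nonneg _) (Finset.mem_univ (⟨0,h0⟩:↥B))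
    rw [hfe0] at h1
    nlinarith
  have hEle1 : ∑ u : ↥B, (phiE phi u)^2 ≤ 1 :=
    le_of_le_of_eq (Finset.sum_le_sum (fun u _ => hfe_sq_le u)) hnorm
  have hsge : phi ⟨0,h0⟩ ≤ ∑ u : ↥B, phiE phi u := by
    have h1 := Finset.single_le_sum (f := fun u : ↥B => phiE phi u)
      (fun i _ => hfe_nonneg i) (Finset.mem_univ (⟨0,h0⟩:↥B))
    simpa [hfe0] using h1
  have hspos : 0 < ∑ u : ↥B, phiE phi u :=
    lt_of_lt_of_le (lt_of_lt_of_le hbeta hphi0) hsge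
  obtain ⟨c, hcE, hcge⟩ : ∃ c : ℝ,
      c * (∑ u : ↥B, (phiE phi u)^2) = (∑ u : ↥B, phiE phi u) ∧ beta ≤ c := by
    refine ⟨(∑ u : ↥B, phiE phi u) / (∑ u : ↥B, (phiE phi u)^2),
      div_mul_cancel₀ _ hEpos.ne', ?_⟩
    rw [le_div_iff₀ hEpos]
    nlinarith [mul_le_mul_of_nonneg_left hEle1 hbeta.le]
  have hcpos : 0 < c := lt_of_lt_of_le hbeta hcge
  obtain ⟨g, hgpt⟩ : ∃ g : ↥B → ℝ, ∀ u : ↥B,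
      g u = (if evenSite (u : Fin d → ℤ) then (1:ℝ) else 0) - c * phiE phi u :=
    ⟨_, fun u => rfl⟩
  have horth1 : (∑ u : ↥B, g u * (if evenSite (u : Fin d → ℤ) then phi u else 0)) = 0 := by
    have hterm : ∀ u : ↥B, g u * (if evenSite (u : Fin d → ℤ) then phi u else 0)
        = phiE phi u - c * (phiE phi u)^2 := by
      intro u
      rw [hgpt u]
      by_cases h : evenSite (u : Fin d → ℤ) <;> simp [phiE, h] <;> ring
    rw [Finset.sum_congr rfl (fun u _ => hterm u), Finset.sum_sub_distrib,
      ← Finset.mul_sum, hcE]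
    ring
  have horth2 : (∑ u : ↥B, g u * (if ¬ evenSite (u : Fin d → ℤ) then phi u else 0)) = 0 := by
    apply Finset.sum_eq_zero
    intro u _
    rw [hgpt u]
    by_cases h : evenSite (u : Fin d → ℤ) <;> simp [phiE, h]
  have hgsq : ∀ u : ↥B, (g u)^2 = ((if evenSite (u : Fin d → ℤ) then (1:ℝ) else 0)
      - 2*c*phiE phi u) + c^2 * (phiE phi u)^2 := by
    intro u
    rw [hgpt u]
    by_cases h : evenSite (u : Fin d → ℤ) <;> simp [phiE, h] <;> ring
  have hsumg : ∑ u : ↥B, (g u)^2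
      = ((∑ u : ↥B, (if evenSite (u : Fin d → ℤ) then (1:ℝ) else 0))
        - 2*c*(∑ u : ↥B, phiE phi u)) + c^2 * (∑ u : ↥B, (phiE phi u)^2) := by
    rw [Finset.sum_congr rfl (fun u _ => hgsq u), Finset.sum_add_distrib,
      Finset.sum_sub_distrib, ← Finset.mul_sum, ← Finset.mul_sum]
  have hone_card : (∑ u : ↥B, (if evenSite (u : Fin d → ℤ) then (1:ℝ) else 0))
      ≤ (B.card : ℝ) := by
    calc (∑ u : ↥B, (if evenSite (u : Fin d → ℤ) then (1:ℝ) else 0))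
        ≤ ∑ _u : ↥B, (1:ℝ) := Finset.sum_le_sum (fun u _ => by split_ifs <;> norm_num)
      _ = (B.card : ℝ) := by simp [Fintype.card_coe]
  have hnormg : ∑ u : ↥B, (g u)^2 ≤ (B.card : ℝ) := by
    rw [hsumg]
    have h4 : c^2 * (∑ u : ↥B, (phiE phi u)^2) = c * (∑ u : ↥B, phiE phi u) := by
      rw [pow_two, mul_assoc, hcE]
    rw [h4]
    nlinarith [mul_nonneg hcpos.le hspos.le]
  have hsum_le : ∑ u : ↥B, ((Qop d B)^[N] g u)^2 ≤ (1-lam2)^(2*N) * (B.card:ℝ) :=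
    (hsecond g horth1 horth2).trans
      (mul_le_mul_of_nonneg_left hnormg (pow_nonneg h2l _))
  have hQg0_sq : ((Qop d B)^[N] g ⟨0,h0⟩)^2
      ≤ ((1-lam2)^N * Real.sqrt (B.card:ℝ))^2 := by
    have h5 : ((Qop d B)^[N] g ⟨0,h0⟩)^2 ≤ ∑ u : ↥B, ((Qop d B)^[N] g u)^2 :=
      Finset.single_le_sum (f := fun u : ↥B => ((Qop d B)^[N] g u)^2)
        (fun i _ => sq_nonneg _) (Finset.mem_univ (⟨0,h0⟩:↥B))
    have h6 : ((1-lam2)^N * Real.sqrt (B.card:ℝ))^2 = (1-lam2)^(2*N) * (B.card:ℝ) := by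
      rw [mul_pow, ← pow_mul, Real.sq_sqrt (show (0:ℝ) ≤ (B.card:ℝ) by positivity),
        Nat.mul_comm N 2]
    rw [h6]; exact h5.trans hsum_le
  have hQg0 : -((1-lam2)^N * Real.sqrt (B.card:ℝ)) ≤ (Qop d B)^[N] g ⟨0,h0⟩ := by
    have hy : 0 ≤ (1-lam2)^N * Real.sqrt (B.card:ℝ) := by positivity
    have habs : |(Qop d B)^[N] g ⟨0,h0⟩| ≤ (1-lam2)^N * Real.sqrt (B.card:ℝ) := by
      rw [← Real.sqrt_sq_eq_abs]
      calc Real.sqrt (((Qop d B)^[N] g ⟨0,h0⟩)^2)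
          ≤ Real.sqrt (((1-lam2)^N * Real.sqrt (B.card:ℝ))^2) :=
            Real.sqrt_le_sqrt hQg0_sq
        _ = _ := Real.sqrt_sq hy
    linarith [neg_abs_le ((Qop d B)^[N] g ⟨0,h0⟩)]
  have hdecomp : (fun u : ↥B => if evenSite (u : Fin d → ℤ) then (1:ℝ) else 0)
      = g + c • phiE phi := by
    funext u
    have h7 := hgpt u
    simp only [Pi.add_apply, Pi.smul_apply, smul_eq_mul, h7]
    ring
  have hiter : (Qop d B)^[N] (fun u : ↥B => if evenSite (u : Fin d → ℤ) then (1:ℝ) else 0)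
      = (Qop d B)^[N] g + (c * (1-lam1)^N) • phiE phi := by
    rw [hdecomp, Qit_add, Qit_smul, hN, Qit_phiE heig k, smul_smul]
  have hval : (Qop d B)^[N]
      (fun u : ↥B => if evenSite (u : Fin d → ℤ) then (1:ℝ) else 0) ⟨0,h0⟩
      = (Qop d B)^[N] g ⟨0,h0⟩ + (1-lam1)^N * (c * phi ⟨0,h0⟩) := by
    rw [hiter]
    simp only [Pi.add_apply, Pi.smul_apply, smul_eq_mul, hfe0]
    ring
  have hmain : (1 - lam1)^N * beta^2 - (1-lam2)^N * Real.sqrt (B.card:ℝ)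
      ≤ (Qop d B)^[N]
        (fun u : ↥B => if evenSite (u : Fin d → ℤ) then (1:ℝ) else 0) ⟨0,h0⟩ := by
    rw [hval]
    have hcb : beta * beta ≤ c * phi ⟨0,h0⟩ :=
      mul_le_mul hcge hphi0 hbeta.le hcpos.le
    have hpow : (0:ℝ) ≤ (1-lam1)^N := pow_nonneg h1l.le N
    have h9 : (1-lam1)^N * beta^2 ≤ (1-lam1)^N * (c * phi ⟨0,h0⟩) := by
      apply mul_le_mul_of_nonneg_left _ hpow
      nlinarith [hcb]
    linarith [hQg0, h9]
  refine ⟨hmain, ?_⟩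
  intro hhyp
  have hmono := Qit_mono (B := B) N
    (f := fun u : ↥B => if evenSite (u : Fin d → ℤ) then (1:ℝ) else 0)
    (g := fun _ : ↥B => (1:ℝ)) (fun u => by split_ifs <;> norm_num) ⟨0,h0⟩
  have hexp : Real.exp (-(N:ℝ) * (lam1 + lam1^2)) ≤ (1-lam1)^N := by
    have h7 : Real.exp (-(lam1 + lam1^2)) ≤ 1 - lam1 := exp_aux hlam1 hsmall
    calc Real.exp (-(N:ℝ)*(lam1+lam1^2))
        = (Real.exp (-(lam1+lam1^2)))^N := by
          rw [show (-(N:ℝ)*(lam1+lam1^2)) = (N:ℝ)*(-(lam1+lam1^2)) by ring,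
            Real.exp_nat_mul]
      _ ≤ (1-lam1)^N := pow_le_pow_left₀ (Real.exp_nonneg _) h7 N
  linarith [hmain, hmono, hhyp,
    mul_le_mul_of_nonneg_left hexp (show (0:ℝ) ≤ beta^2 by positivity)]
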